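/- Let m ≥ 3, ζ = exp(2πi/m), and let 1 ≤ i < m/2 be an integer. Then for every complex number q with q^m ≠ 1 and q^2 ≠ 1, we have ((q^m − 1)(q^2 − 1)/(2m)) · Σ_{k=0}^{m−1} (ζ^{ik} + ζ^{−ik}) / ((q − ζ^k)(q − ζ^{−k})) = q^i + q^{m−i}. (This computes the fake degree of the two-dimensional character χ_i of the dihedral group I_2(m): the reflections contribute 0 to the defining sum since χ_i vanishes on them.) -/

import Mathlib

open Complex Finset

/-- Root-of-unity filter: `∑_{k<m} (ζ^c)^k = m` if `m ∣ c`, else `0`. -/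
lemma sum_pow_prim (m c : ℕ) (ζ : ℂ) (hζ : IsPrimitiveRoot ζ m) :
    ∑ k ∈ Finset.range m, (ζ ^ c) ^ k = if m ∣ c then (m : ℂ) else 0 := by
  by_cases h : m ∣ c
  · simp [h, (hζ.pow_eq_one_iff_dvd c).2 h]
  · have h1 : ζ ^ c ≠ 1 := fun hc => h ((hζ.pow_eq_one_iff_dvd c).1 hc)
    rw [if_neg h, geom_sum_eq h1]
    have : (ζ ^ c) ^ m = 1 := by
      rw [← pow_mul, mul_comm, pow_mul, hζ.pow_eq_one, one_pow]
    simp [this]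

/-- Lagrange-type sum: `∑_k ζ^{ak}/(q - ζ^k) = m q^{a-1}/(q^m - 1)` for `1 ≤ a ≤ m`. -/
lemma lemA (m a : ℕ) (ζ : ℂ) (hζ : IsPrimitiveRoot ζ m) (q : ℂ)
    (hq : q ^ m ≠ 1) (ha1 : 1 ≤ a) (ha2 : a ≤ m) :
    ∑ k ∈ Finset.range m, (ζ ^ k) ^ a / (q - ζ ^ k) =
      m * q ^ (a - 1) / (q ^ m - 1) := by
  have hm : 0 < m := lt_of_lt_of_le ha1 ha2
  have hqm : q ^ m - 1 ≠ 0 := sub_ne_zero.2 hq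
  have hterm : ∀ k ∈ Finset.range m, (ζ ^ k) ^ a / (q - ζ ^ k) =
      (∑ b ∈ Finset.range m, (ζ ^ k) ^ a * (q ^ b * (ζ ^ k) ^ (m - 1 - b))) / (q ^ m - 1) := by
    intro k _
    have hzm : (ζ ^ k) ^ m = 1 := by
      rw [← pow_mul, mul_comm, pow_mul, hζ.pow_eq_one, one_pow]
    have hd : q - ζ ^ k ≠ 0 := by
      intro h
      apply hq
      rw [sub_eq_zero] at h
      rw [h, hzm]
    have hgeom : (∑ b ∈ Finset.range m, q ^ b * (ζ ^ k) ^ (m - 1 - b)) * (q - ζ ^ k)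
        = q ^ m - 1 := by
      rw [geom_sum₂_mul, hzm]
    rw [div_eq_div_iff hd hqm, ← Finset.mul_sum, mul_assoc, hgeom]
  rw [Finset.sum_congr rfl hterm, ← Finset.sum_div]
  congr 1
  rw [Finset.sum_comm]
  have : ∀ b ∈ Finset.range m,
      ∑ k ∈ Finset.range m, (ζ ^ k) ^ a * (q ^ b * (ζ ^ k) ^ (m - 1 - b)) =
      q ^ b * (if m ∣ (a + (m - 1 - b)) then (m : ℂ) else 0) := by
    intro b _
    rw [← sum_pow_prim m (a + (m - 1 - b)) ζ hζ, Finset.mul_sum]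
    apply Finset.sum_congr rfl
    intro k _
    have hp : (ζ ^ (a + (m - 1 - b))) ^ k = (ζ ^ k) ^ a * (ζ ^ k) ^ (m - 1 - b) := by
      rw [← pow_add, ← pow_mul, ← pow_mul, Nat.mul_comm]
    rw [hp]
    ring
  rw [Finset.sum_congr rfl this]
  have hiff : ∀ b ∈ Finset.range m, (m ∣ (a + (m - 1 - b))) ↔ b = a - 1 := by
    intro b hb
    rw [Finset.mem_range] at hb
    constructor
    · intro hdvd
      have h1 : m ≤ a + (m - 1 - b) := Nat.le_of_dvd (by omega) hdvd
      have h3 : a + (m - 1 - b) = m := by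
        obtain ⟨c, hc⟩ := hdvd
        rcases Nat.lt_or_ge c 2 with h | h
        · interval_cases c <;> omega
        · exfalso
          have h4 : m * 2 ≤ m * c := Nat.mul_le_mul_left m h
          omega
      omega
    · intro h; subst h; exact ⟨1, by omega⟩
  calc ∑ b ∈ Finset.range m, q ^ b * (if m ∣ (a + (m - 1 - b)) then (m : ℂ) else 0)
      = ∑ b ∈ Finset.range m, (if b = a - 1 then q ^ b * m else 0) := by
        apply Finset.sum_congr rfl
        intro b hb
        by_cases h : b = a - 1
        · rw [if_pos h, if_pos ((hiff b hb).2 h)]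
        · rw [if_neg h, if_neg (fun hd => h ((hiff b hb).1 hd)), mul_zero]
    _ = m * q ^ (a - 1) := by
        rw [Finset.sum_ite_eq' (Finset.range m) (a - 1) (fun b => q ^ b * (m : ℂ))]
        rw [if_pos (Finset.mem_range.2 (by omega))]
        ring

/-- Companion sum: `∑_k ζ^{ak}/(q ζ^k - 1) = m q^{m-a}/(q^m - 1)` for `1 ≤ a ≤ m`. -/
lemma lemB (m a : ℕ) (ζ : ℂ) (hζ : IsPrimitiveRoot ζ m) (q : ℂ)
    (hq : q ^ m ≠ 1) (ha1 : 1 ≤ a) (ha2 : a ≤ m) :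
    ∑ k ∈ Finset.range m, (ζ ^ k) ^ a / (q * ζ ^ k - 1) =
      m * q ^ (m - a) / (q ^ m - 1) := by
  have hm : 0 < m := lt_of_lt_of_le ha1 ha2
  have hqm : q ^ m - 1 ≠ 0 := sub_ne_zero.2 hq
  have hterm : ∀ k ∈ Finset.range m, (ζ ^ k) ^ a / (q * ζ ^ k - 1) =
      (∑ b ∈ Finset.range m, (ζ ^ k) ^ a * (q * ζ ^ k) ^ b) / (q ^ m - 1) := by
    intro k _
    have hzm : (ζ ^ k) ^ m = 1 := by
      rw [← pow_mul, mul_comm, pow_mul, hζ.pow_eq_one, one_pow]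
    have hqzm : (q * ζ ^ k) ^ m = q ^ m := by
      rw [mul_pow, hzm, mul_one]
    have hd : q * ζ ^ k - 1 ≠ 0 := by
      intro h
      apply hq
      rw [sub_eq_zero] at h
      rw [← hqzm, h, one_pow]
    have hgeom : (∑ b ∈ Finset.range m, (q * ζ ^ k) ^ b) * (q * ζ ^ k - 1)
        = q ^ m - 1 := by
      rw [geom_sum_mul, hqzm]
    rw [div_eq_div_iff hd hqm, ← Finset.mul_sum, mul_assoc, hgeom]
  rw [Finset.sum_congr rfl hterm, ← Finset.sum_div]
  congr 1
  rw [Finset.sum_comm]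
  have : ∀ b ∈ Finset.range m,
      ∑ k ∈ Finset.range m, (ζ ^ k) ^ a * (q * ζ ^ k) ^ b =
      q ^ b * (if m ∣ (a + b) then (m : ℂ) else 0) := by
    intro b _
    rw [← sum_pow_prim m (a + b) ζ hζ, Finset.mul_sum]
    apply Finset.sum_congr rfl
    intro k _
    have hp : (ζ ^ (a + b)) ^ k = (ζ ^ k) ^ a * (ζ ^ k) ^ b := by
      rw [← pow_add, ← pow_mul, ← pow_mul, Nat.mul_comm]
    rw [hp, mul_pow]
    ring
  rw [Finset.sum_congr rfl this]
  have hiff : ∀ b ∈ Finset.range m, (m ∣ (a + b)) ↔ b = m - a := by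
    intro b hb
    rw [Finset.mem_range] at hb
    constructor
    · intro hdvd
      have h1 : m ≤ a + b := Nat.le_of_dvd (by omega) hdvd
      have h3 : a + b = m := by
        obtain ⟨c, hc⟩ := hdvd
        rcases Nat.lt_or_ge c 2 with h | h
        · interval_cases c <;> omega
        · exfalso
          have h4 : m * 2 ≤ m * c := Nat.mul_le_mul_left m h
          omega
      omega
    · intro h; subst h; exact ⟨1, by omega⟩
  calc ∑ b ∈ Finset.range m, q ^ b * (if m ∣ (a + b) then (m : ℂ) else 0)
      = ∑ b ∈ Finset.range m, (if b = m - a then q ^ b * m else 0) := by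
        apply Finset.sum_congr rfl
        intro b hb
        by_cases h : b = m - a
        · rw [if_pos h, if_pos ((hiff b hb).2 h)]
        · rw [if_neg h, if_neg (fun hd => h ((hiff b hb).1 hd)), mul_zero]
    _ = m * q ^ (m - a) := by
        rw [Finset.sum_ite_eq' (Finset.range m) (m - a) (fun b => q ^ b * (m : ℂ))]
        rw [if_pos (Finset.mem_range.2 (by omega))]
        ring

/-- Partial fraction identity used termwise. -/
lemma pf_identity (q z A B : ℂ) (hz0 : z ≠ 0) (hd1 : q - z ≠ 0) (hd2 : q * z - 1 ≠ 0)
    (hq20 : q ^ 2 - 1 ≠ 0) :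
    (A + B) / ((q - z) * ((q * z - 1) / z)) =
      (1 / (q ^ 2 - 1)) * (q * ((A * z + B * z) / (q * z - 1)) + (A * z + B * z) / (q - z)) := by
  field_simp
  ring

/-- The fake degree of the two-dimensional character `χ_i` of the dihedral group
`I₂(m)` equals `q^i + q^(m-i)`. -/
theorem fake_degree_chi_i (m i : ℕ) (hm : 3 ≤ m) (hi : 1 ≤ i) (hi2 : 2 * i < m)
    (ζ : ℂ) (hζ : ζ = Complex.exp (2 * Real.pi * Complex.I / m))
    (q : ℂ) (hqm : q ^ m ≠ 1) (hq2 : q ^ 2 ≠ 1) :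
    ((q ^ m - 1) * (q ^ 2 - 1) / (2 * m)) *
      ∑ k ∈ Finset.range m,
        (ζ ^ (i * k) + ζ ^ (-(i * k : ℤ))) / ((q - ζ ^ k) * (q - ζ ^ (-(k : ℤ)))) =
    q ^ i + q ^ (m - i) := by
  have hm0 : m ≠ 0 := by omega
  have hprim : IsPrimitiveRoot ζ m := by
    rw [hζ]; exact Complex.isPrimitiveRoot_exp m hm0
  have hζm : ζ ^ m = 1 := hprim.pow_eq_one
  have hζ0 : ζ ≠ 0 := by
    intro h
    rw [h, zero_pow hm0] at hζm
    exact zero_ne_one hζm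
  have hqm0 : q ^ m - 1 ≠ 0 := sub_ne_zero.2 hqm
  have hq20 : q ^ 2 - 1 ≠ 0 := sub_ne_zero.2 hq2
  have hmc : (m : ℂ) ≠ 0 := Nat.cast_ne_zero.2 hm0
  -- rewrite each summand into partial-fraction form
  have hsummand : ∀ k ∈ Finset.range m,
      (ζ ^ (i * k) + ζ ^ (-(i * k : ℤ))) / ((q - ζ ^ k) * (q - ζ ^ (-(k : ℤ)))) =
      (1 / (q ^ 2 - 1)) *
        (q * (((ζ ^ k) ^ (i + 1) + (ζ ^ k) ^ (m - i + 1)) / (q * ζ ^ k - 1)) +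
         ((ζ ^ k) ^ (i + 1) + (ζ ^ k) ^ (m - i + 1)) / (q - ζ ^ k)) := by
    intro k _
    set z : ℂ := ζ ^ k with hz
    have hzm : z ^ m = 1 := by
      rw [hz, ← pow_mul, mul_comm, pow_mul, hζm, one_pow]
    have hz0 : z ≠ 0 := pow_ne_zero k hζ0
    have hd1 : q - z ≠ 0 := by
      intro h; apply hqm; rw [sub_eq_zero] at h; rw [h, hzm]
    have hd2 : q * z - 1 ≠ 0 := by
      intro h; apply hqm
      rw [sub_eq_zero] at h
      have : (q * z) ^ m = 1 := by rw [h, one_pow]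
      rw [mul_pow, hzm, mul_one] at this
      exact this
    -- rewrite the zpows
    have e1 : ζ ^ (i * k) = z ^ i := by rw [hz, ← pow_mul, mul_comm]
    have e2 : ζ ^ (-(i * k : ℤ)) = z ^ (m - i) := by
      have h1 : ζ ^ (-(i * k : ℤ)) = (z ^ i)⁻¹ := by
        rw [zpow_neg, ← e1]
        norm_cast
      rw [h1]
      have h2 : z ^ (m - i) * z ^ i = 1 := by
        rw [← pow_add]
        have : m - i + i = m := by omega
        rw [this, hzm]
      field_simp
      linear_combination -h2
    have e3 : ζ ^ (-(k : ℤ)) = z⁻¹ := by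
      rw [zpow_neg, hz]
      norm_cast
    have e4 : q - z⁻¹ = (q * z - 1) / z := by field_simp
    rw [e1, e2, e3, e4, pow_succ, pow_succ]
    exact pf_identity q z _ _ hz0 hd1 hd2 hq20
  rw [Finset.sum_congr rfl hsummand]
  rw [← Finset.mul_sum, Finset.sum_add_distrib, ← Finset.mul_sum]
  -- split the two sums further
  have hsB : ∑ k ∈ Finset.range m,
      ((ζ ^ k) ^ (i + 1) + (ζ ^ k) ^ (m - i + 1)) / (q * ζ ^ k - 1) =
      m * q ^ (m - i - 1) / (q ^ m - 1) + m * q ^ (i - 1) / (q ^ m - 1) := by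
    have hsplit : ∀ k ∈ Finset.range m,
        ((ζ ^ k) ^ (i + 1) + (ζ ^ k) ^ (m - i + 1)) / (q * ζ ^ k - 1) =
        (ζ ^ k) ^ (i + 1) / (q * ζ ^ k - 1) + (ζ ^ k) ^ (m - i + 1) / (q * ζ ^ k - 1) := by
      intro k _; rw [add_div]
    rw [Finset.sum_congr rfl hsplit, Finset.sum_add_distrib]
    rw [lemB m (i + 1) ζ hprim q hqm (by omega) (by omega),
        lemB m (m - i + 1) ζ hprim q hqm (by omega) (by omega),
        show m - (i + 1) = m - i - 1 from by omega,
        show m - (m - i + 1) = i - 1 from by omega]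
  have hsA : ∑ k ∈ Finset.range m,
      ((ζ ^ k) ^ (i + 1) + (ζ ^ k) ^ (m - i + 1)) / (q - ζ ^ k) =
      m * q ^ i / (q ^ m - 1) + m * q ^ (m - i) / (q ^ m - 1) := by
    have hsplit : ∀ k ∈ Finset.range m,
        ((ζ ^ k) ^ (i + 1) + (ζ ^ k) ^ (m - i + 1)) / (q - ζ ^ k) =
        (ζ ^ k) ^ (i + 1) / (q - ζ ^ k) + (ζ ^ k) ^ (m - i + 1) / (q - ζ ^ k) := by
      intro k _; rw [add_div]
    rw [Finset.sum_congr rfl hsplit, Finset.sum_add_distrib]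
    rw [lemA m (i + 1) ζ hprim q hqm (by omega) (by omega),
        lemA m (m - i + 1) ζ hprim q hqm (by omega) (by omega),
        show i + 1 - 1 = i from by omega,
        show m - i + 1 - 1 = m - i from by omega]
  rw [hsB, hsA]
  have hq1 : q ^ (m - i - 1) * q = q ^ (m - i) := by
    rw [← pow_succ]
    congr 1
    omega
  have hq2' : q ^ (i - 1) * q = q ^ i := by
    rw [← pow_succ]
    congr 1
    omega
  have e5 : q * ((m : ℂ) * q ^ (m - i - 1) / (q ^ m - 1) + m * q ^ (i - 1) / (q ^ m - 1)) =
      (m : ℂ) * q ^ (m - i) / (q ^ m - 1) + m * q ^ i / (q ^ m - 1) := by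
    field_simp
    linear_combination hq1 + hq2'
  rw [e5]
  field_simp
  ring
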